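/- Let k be a field of characteristic p > 0, let m > 0, set q = p^m, let f be an m-truncated group law over k, let R be a commutative k-algebra, and let ∂ = (∂_n)_{0 ≤ n < q} be an f-iterative m-truncated HS-derivation on R. Then for all positive integers i, j with i + j < q there exist c_1, …, c_{i+j−1} ∈ k such that for every r ∈ R: ∂_j(∂_i(r)) = binom(i+j, i)·∂_{i+j}(r) + Σ_{s=1}^{i+j−1} c_s·∂_s(r). -/

import Mathlib

open Finset MvPolynomial

/-- `f ∈ k[X,Y]` is an `m`-truncated group law over `k` (for the prime `p`):
all monomials of `f` have both exponents `< p ^ m`, `f(X,0) = X`, `f(0,Y) = Y`, and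
`f(f(X,Y),Z) ≡ f(X,f(Y,Z))` modulo the ideal `(X^{p^m}, Y^{p^m}, Z^{p^m})`. -/
def IsTruncGroupLaw (p m : ℕ) {k : Type*} [Field k] (f : MvPolynomial (Fin 2) k) : Prop :=
  (∀ d ∈ f.support, d 0 < p ^ m ∧ d 1 < p ^ m) ∧
  (MvPolynomial.aeval ![(Polynomial.X : Polynomial k), 0] f = Polynomial.X) ∧
  (MvPolynomial.aeval ![0, (Polynomial.X : Polynomial k)] f = Polynomial.X) ∧
  (MvPolynomial.aeval
      ![MvPolynomial.aeval ![(MvPolynomial.X 0 : MvPolynomial (Fin 3) k), MvPolynomial.X 1] f,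
        MvPolynomial.X 2] f -
    MvPolynomial.aeval
      ![(MvPolynomial.X 0 : MvPolynomial (Fin 3) k),
        MvPolynomial.aeval ![(MvPolynomial.X 1 : MvPolynomial (Fin 3) k), MvPolynomial.X 2] f] f
    ∈ Ideal.span {(MvPolynomial.X 0 : MvPolynomial (Fin 3) k) ^ p ^ m,
        MvPolynomial.X 1 ^ p ^ m, MvPolynomial.X 2 ^ p ^ m})

/-- `D` is an `m`-truncated HS-derivation on `R` (for the prime `p`):
only the maps `D n` for `n < p ^ m` are relevant. -/
def IsTruncHSDeriv (p m : ℕ) {R : Type*} [CommRing R] (D : ℕ → R → R) : Prop :=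
  (∀ n, n < p ^ m → ∀ x y, D n (x + y) = D n x + D n y) ∧
  (∀ x, D 0 x = x) ∧
  (∀ n, n < p ^ m → ∀ x y, D n (x * y) = ∑ ij ∈ Finset.HasAntidiagonal.antidiagonal n, D ij.1 x * D ij.2 y)

/-- `D` is an `f`-iterative `m`-truncated HS-derivation (an `f`-derivation):
`D j ∘ D i = Σ_{n < p^m} c_{i,j,n} • D n` where `c_{i,j,n}` is the coefficient of
`X^i Y^j` in `f ^ n`. -/
def IsFIterativeTrunc (p m : ℕ) {k : Type*} [Field k] (f : MvPolynomial (Fin 2) k)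
    {R : Type*} [CommRing R] [Algebra k R] (D : ℕ → R → R) : Prop :=
  ∀ i j : ℕ, i < p ^ m → j < p ^ m → ∀ r,
    D j (D i r) = ∑ n ∈ Finset.range (p ^ m),
      MvPolynomial.coeff (Finsupp.single (0 : Fin 2) i + Finsupp.single (1 : Fin 2) j) (f ^ n)
        • D n r


section Aux
variable {k : Type*} [CommRing k]


lemma fin2_eq_zero {e : Fin 2 →₀ ℕ} (h : e 0 + e 1 = 0) : e = 0 := by
  ext a; fin_cases a <;> simp <;> omega

lemma fin2_eq_single {e : Fin 2 →₀ ℕ} (h : e 0 + e 1 = 1) :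
    e = Finsupp.single 0 1 ∨ e = Finsupp.single 1 1 := by
  rcases Nat.eq_zero_or_pos (e 0) with h0 | h0
  · right; ext a; fin_cases a <;> simp [Finsupp.single_apply] <;> omega
  · left; ext a; fin_cases a <;> simp [Finsupp.single_apply] <;> omega

lemma coeff_aeval_X0 (f : MvPolynomial (Fin 2) k) (n : ℕ) :
    (MvPolynomial.aeval ![Polynomial.X, 0] f).coeff n = MvPolynomial.coeff (Finsupp.single 0 n) f := by
  induction f using MvPolynomial.induction_on' with
  | add p q hp hq => simp [map_add, hp, hq]
  | monomial d c =>
    rw [aeval_monomial, coeff_monomial]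
    rw [Finsupp.prod_fintype _ _ (fun i => pow_zero _), Fin.prod_univ_two]
    simp only [Matrix.cons_val_zero, Matrix.cons_val_one, Matrix.head_cons]
    by_cases h1 : d 1 = 0
    · rw [h1, pow_zero, mul_one]
      rw [Polynomial.algebraMap_eq, Polynomial.coeff_C_mul, Polynomial.coeff_X_pow]
      by_cases h2 : d = Finsupp.single 0 n
      · rw [if_pos h2, if_pos, mul_one]
        rw [h2]; simp
      · rw [if_neg h2, if_neg, mul_zero]
        intro hn; apply h2
        ext a; fin_cases a <;> simp [Finsupp.single_apply] <;> omega
    · rw [zero_pow h1, mul_zero, mul_zero, Polynomial.coeff_zero]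

      rw [if_neg]; intro hd
      apply h1; rw [hd]; simp [Finsupp.single_apply]

lemma coeff_aeval_X1 (f : MvPolynomial (Fin 2) k) (n : ℕ) :
    (MvPolynomial.aeval ![0, Polynomial.X] f).coeff n = MvPolynomial.coeff (Finsupp.single 1 n) f := by
  induction f using MvPolynomial.induction_on' with
  | add p q hp hq => simp [map_add, hp, hq]
  | monomial d c =>
    rw [aeval_monomial, coeff_monomial]
    rw [Finsupp.prod_fintype _ _ (fun i => pow_zero _), Fin.prod_univ_two]
    simp only [Matrix.cons_val_zero, Matrix.cons_val_one, Matrix.head_cons]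
    by_cases h1 : d 0 = 0
    · rw [h1, pow_zero, one_mul]
      rw [Polynomial.algebraMap_eq, Polynomial.coeff_C_mul, Polynomial.coeff_X_pow]
      by_cases h2 : d = Finsupp.single 1 n
      · rw [if_pos h2, if_pos, mul_one]
        rw [h2]; simp
      · rw [if_neg h2, if_neg, mul_zero]
        intro hn; apply h2
        ext a; fin_cases a <;> simp [Finsupp.single_apply] <;> omega
    · rw [zero_pow h1, zero_mul, mul_zero, Polynomial.coeff_zero]
      rw [if_neg]; intro hd
      apply h1; rw [hd]; simp [Finsupp.single_apply]

lemma coeff_pow_lt (f : MvPolynomial (Fin 2) k) (h0 : MvPolynomial.coeff 0 f = 0) :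
    ∀ n (e : Fin 2 →₀ ℕ), e 0 + e 1 < n → MvPolynomial.coeff e (f ^ n) = 0 := by
  intro n
  induction n with
  | zero => omega
  | succ n ih =>
    intro e he
    rw [pow_succ', coeff_mul]
    apply Finset.sum_eq_zero
    rintro ⟨e1, e2⟩ hmem
    rw [Finset.HasAntidiagonal.mem_antidiagonal] at hmem
    by_cases h1 : e1 = 0
    · rw [h1, h0, zero_mul]
    · have hw : 1 ≤ e1 0 + e1 1 := by
        by_contra hc
        exact h1 (fin2_eq_zero (by omega))
      have he' : e2 0 + e2 1 < n := by
        have h00 : e1 0 + e2 0 = e 0 := by rw [← hmem]; simp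
        have h11 : e1 1 + e2 1 = e 1 := by rw [← hmem]; simp
        omega
      rw [ih e2 he', mul_zero]

lemma coeff_pow_choose (f : MvPolynomial (Fin 2) k)
    (h0 : MvPolynomial.coeff 0 f = 0)
    (hx : MvPolynomial.coeff (Finsupp.single 0 1) f = 1)
    (hy : MvPolynomial.coeff (Finsupp.single 1 1) f = 1) :
    ∀ n (e : Fin 2 →₀ ℕ), e 0 + e 1 = n →
      MvPolynomial.coeff e (f ^ n) = (n.choose (e 0) : k) := by
  intro n
  induction n with
  | zero =>
    intro e he
    rw [fin2_eq_zero he]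
    simp
  | succ n ih =>
    intro e he
    have hg : MvPolynomial.coeff e ((f - X 0 - X 1) * f ^ n) = 0 := by
      rw [coeff_mul]
      apply Finset.sum_eq_zero
      rintro ⟨e1, e2⟩ hmem
      rw [Finset.HasAntidiagonal.mem_antidiagonal] at hmem
      have h00 : e1 0 + e2 0 = e 0 := by rw [← hmem]; simp
      have h11 : e1 1 + e2 1 = e 1 := by rw [← hmem]; simp
      rcases Nat.lt_or_ge (e1 0 + e1 1) 2 with hw | hw
      · have : MvPolynomial.coeff e1 (f - X 0 - X 1) = 0 := by
          interval_cases h : (e1 0 + e1 1)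
          · rw [fin2_eq_zero h]
            simp [h0, coeff_X']
          · rcases fin2_eq_single h with rfl | rfl
            · simp [hx, coeff_X', Finsupp.single_eq_single_iff]
            · simp [hy, coeff_X', Finsupp.single_eq_single_iff]
        rw [this, zero_mul]
      · rw [coeff_pow_lt f h0 n e2 (by omega), mul_zero]
    have key : MvPolynomial.coeff e (f ^ (n + 1)) =
        (if (0 : Fin 2) ∈ e.support then MvPolynomial.coeff (e - Finsupp.single 0 1) (f ^ n) else 0)
        + (if (1 : Fin 2) ∈ e.support then MvPolynomial.coeff (e - Finsupp.single 1 1) (f ^ n) else 0) := by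
      have : f ^ (n + 1) = f ^ n * X 0 + f ^ n * X 1 + (f - X 0 - X 1) * f ^ n := by
        ring
      rw [this, coeff_add, coeff_add, hg, add_zero, coeff_mul_X', coeff_mul_X']
    rw [key]
    rcases Nat.eq_zero_or_pos (e 0) with h0e | h0e
    · rw [if_neg (by simp [h0e]), if_pos (by simp; omega), zero_add]
      rw [ih (e - Finsupp.single (1 : Fin 2) 1) (by simp [Finsupp.tsub_apply, Finsupp.single_apply]; omega)]
      simp [Finsupp.tsub_apply, Finsupp.single_apply, h0e]
    · rcases Nat.eq_zero_or_pos (e 1) with h1e | h1e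
      · rw [if_pos (by simp; omega), if_neg (by simp [h1e]), add_zero]
        rw [ih (e - Finsupp.single (0 : Fin 2) 1) (by simp [Finsupp.tsub_apply, Finsupp.single_apply]; omega)]
        have : ((e - Finsupp.single 0 1 : Fin 2 →₀ ℕ)) (0 : Fin 2) = e 0 - 1 := by
          simp [Finsupp.tsub_apply, Finsupp.single_apply]
        rw [this]
        have he0 : e 0 = n + 1 := by omega
        rw [he0]; simp
      · rw [if_pos (by simp; omega), if_pos (by simp; omega)]
        rw [ih (e - Finsupp.single (0 : Fin 2) 1) (by simp [Finsupp.tsub_apply, Finsupp.single_apply]; omega),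
            ih (e - Finsupp.single (1 : Fin 2) 1) (by simp [Finsupp.tsub_apply, Finsupp.single_apply]; omega)]
        have e00 : ((e - Finsupp.single 0 1 : Fin 2 →₀ ℕ)) (0 : Fin 2) = e 0 - 1 := by
          simp [Finsupp.tsub_apply, Finsupp.single_apply]
        have e10 : ((e - Finsupp.single 1 1 : Fin 2 →₀ ℕ)) (0 : Fin 2) = e 0 := by
          simp [Finsupp.tsub_apply, Finsupp.single_apply]
        rw [e00, e10]
        obtain ⟨a, ha⟩ : ∃ a, e 0 = a + 1 := ⟨e 0 - 1, by omega⟩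
        rw [ha]
        simp only [Nat.add_sub_cancel, Nat.choose_succ_succ]
        push_cast
        ring

end Aux

/-- Up to lower order terms, the `f`-iterativity rule looks like the additive one:
`D j ∘ D i = binom(i+j, i) • D (i+j) + (k-linear combination of D 1, …, D (i+j-1))`. -/
theorem f_deriv_approx_additive (p : ℕ) (hp : p.Prime) (m : ℕ) (hm : 0 < m)
    (k : Type*) [Field k] [CharP k p]
    (f : MvPolynomial (Fin 2) k) (hf : IsTruncGroupLaw p m f)
    (R : Type*) [CommRing R] [Algebra k R]
    (d : ℕ → R → R)
    (hd : IsTruncHSDeriv p m d)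
    (hiter : IsFIterativeTrunc p m f d)
    (i j : ℕ) (hi : 0 < i) (hj : 0 < j) (hij : i + j < p ^ m) :
    ∃ c : ℕ → k, ∀ r : R,
      d j (d i r) = (i + j).choose i • d (i + j) r + ∑ s ∈ Finset.Ico 1 (i + j), c s • d s r := by
  have h0 : MvPolynomial.coeff 0 f = 0 := by
    have h := coeff_aeval_X0 f 0
    rw [hf.2.1] at h
    simpa using h.symm
  have hx : MvPolynomial.coeff (Finsupp.single 0 1) f = 1 := by
    have h := coeff_aeval_X0 f 1
    rw [hf.2.1] at h
    simpa using h.symm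
  have hy : MvPolynomial.coeff (Finsupp.single 1 1) f = 1 := by
    have h := coeff_aeval_X1 f 1
    rw [hf.2.2.1] at h
    simpa using h.symm
  set t : Fin 2 →₀ ℕ := Finsupp.single (0 : Fin 2) i + Finsupp.single (1 : Fin 2) j with htdef
  have ht0 : t 0 = i := by simp [htdef, Finsupp.single_apply]
  have ht1 : t 1 = j := by simp [htdef, Finsupp.single_apply]
  refine ⟨fun s => MvPolynomial.coeff t (f ^ s), fun r => ?_⟩
  rw [hiter i j (by omega) (by omega) r]
  have hsub : Finset.Ico 1 (i + j + 1) ⊆ Finset.range (p ^ m) := by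
    intro x hx
    rw [Finset.mem_Ico] at hx
    rw [Finset.mem_range]
    omega
  have key : ∀ n ∈ Finset.range (p ^ m), n ∉ Finset.Ico 1 (i + j + 1) →
      MvPolynomial.coeff t (f ^ n) • d n r = 0 := by
    intro n hn hn'
    rw [Finset.mem_range] at hn
    rw [Finset.mem_Ico] at hn'
    rcases Nat.eq_zero_or_pos n with rfl | hpos
    · have : MvPolynomial.coeff t (f ^ 0) = 0 := by
        rw [pow_zero, MvPolynomial.coeff_one, if_neg]
        intro hc
        have h00 : i = 0 := by rw [← ht0, ← hc]; simp
        omega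
      rw [this, zero_smul]
    · have : MvPolynomial.coeff t (f ^ n) = 0 :=
        coeff_pow_lt f h0 n t (by omega)
      rw [this, zero_smul]
  rw [← Finset.sum_subset hsub key]
  rw [Finset.sum_Ico_succ_top (by omega)]
  rw [coeff_pow_choose f h0 hx hy (i + j) t (by omega), ht0]
  rw [Nat.cast_smul_eq_nsmul]
  rw [add_comm]
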